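/- Let B be the shifted distribution defined by B(x) = A(x) for |x| > dδ + 5ε and B(x) = A(x+4ε) otherwise, where A is the normalized G_{δ,ε} with δ < 1 and ε < δ/8. Then χ²(B, N(0,1)) ≤ C·(δ/ε)² for an absolute constant C. -/

import Mathlib

open Real

/-- Standard Gaussian density. -/
noncomputable def stdG (x : ℝ) : ℝ := (Real.sqrt (2 * Real.pi))⁻¹ * Real.exp (-x ^ 2 / 2)

open Classical in
/-- The density of the measure G_{δ,ε}. -/
noncomputable def Gde (δ ε x : ℝ) : ℝ :=
  if ∃ n : ℤ, |x - n * δ| ≤ ε then (δ / (2 * ε)) * stdG x else 0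

open MeasureTheory

lemma stdG_pos (x : ℝ) : 0 < stdG x := by
  unfold stdG
  have : 0 < Real.sqrt (2 * Real.pi) := Real.sqrt_pos.2 (by positivity)
  positivity

lemma stdG_cont : Continuous stdG := by
  unfold stdG; fun_prop

lemma integrable_stdG : Integrable stdG := by
  have h : Integrable (fun x : ℝ => Real.exp (-(1/2) * x ^ 2)) := integrable_exp_neg_mul_sq (by norm_num)
  have : (fun x : ℝ => stdG x) = fun x => (Real.sqrt (2 * Real.pi))⁻¹ * Real.exp (-(1/2) * x ^ 2) := by
    funext x; unfold stdG; ring_nf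
  have h2 := (h.const_mul ((Real.sqrt (2 * Real.pi))⁻¹))
  exact h2.congr (by filter_upwards with x; unfold stdG; ring_nf)

lemma integral_stdG : ∫ x, stdG x = 1 := by
  have h : ∫ x : ℝ, Real.exp (-(1/2) * x ^ 2) = Real.sqrt (Real.pi / (1/2)) := integral_gaussian (1/2)
  have h2 : (fun x : ℝ => stdG x) = fun x => (Real.sqrt (2 * Real.pi))⁻¹ * Real.exp (-(1/2) * x ^ 2) := by
    funext x; unfold stdG; ring_nf
  rw [h2, integral_const_mul, h]
  rw [show Real.pi / (1/2) = 2 * Real.pi by ring]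
  field_simp

lemma measurable_Gde (δ ε : ℝ) : Measurable (Gde δ ε) := by
  have hU : MeasurableSet {x : ℝ | ∃ n : ℤ, |x - n * δ| ≤ ε} := by
    have : {x : ℝ | ∃ n : ℤ, |x - n * δ| ≤ ε} = ⋃ n : ℤ, {x | |x - n * δ| ≤ ε} := by
      ext x; simp
    rw [this]
    exact MeasurableSet.iUnion fun n =>
      measurableSet_le (by fun_prop) measurable_const
  unfold Gde
  exact Measurable.ite hU (by fun_prop [stdG]) measurable_const

lemma Gde_nonneg (δ ε : ℝ) (hδ : 0 < δ) (hε : 0 < ε) (x : ℝ) : 0 ≤ Gde δ ε x := by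
  unfold Gde
  split
  · have := stdG_pos x; positivity
  · exact le_refl _

lemma Gde_le (δ ε : ℝ) (hδ : 0 < δ) (hε : 0 < ε) (x : ℝ) :
    Gde δ ε x ≤ (δ / (2 * ε)) * stdG x := by
  unfold Gde
  split
  · exact le_refl _
  · have := stdG_pos x; positivity

lemma integrable_Gde (δ ε : ℝ) (hδ : 0 < δ) (hε : 0 < ε) : Integrable (Gde δ ε) := by
  refine (integrable_stdG.const_mul (δ / (2 * ε))).mono'
    (measurable_Gde δ ε).aestronglyMeasurable ?_
  filter_upwards with x
  rw [Real.norm_eq_abs, abs_of_nonneg (Gde_nonneg δ ε hδ hε x)]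
  exact Gde_le δ ε hδ hε x

/-- Key identity: `stdG (x+a)^2 / stdG x = exp (a^2) * stdG (x + 2*a)`. -/
lemma stdG_sq_div (x a : ℝ) :
    stdG (x + a) ^ 2 / stdG x = Real.exp (a ^ 2) * stdG (x + 2 * a) := by
  rw [div_eq_iff (ne_of_gt (stdG_pos x))]
  unfold stdG
  have he : Real.exp (-(x + a) ^ 2 / 2) ^ 2
      = Real.exp (a ^ 2) * (Real.exp (-(x + 2 * a) ^ 2 / 2) * Real.exp (-x ^ 2 / 2)) := by
    rw [pow_two, ← Real.exp_add, ← Real.exp_add, ← Real.exp_add]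
    congr 1; ring
  rw [mul_pow, he, pow_two]
  ring

lemma Gde_integral_lb (δ ε : ℝ) (hδ : 0 < δ) (hδ1 : δ < 1) (hε : 0 < ε) (hε8 : ε < δ / 8) :
    stdG 2 ≤ ∫ y, Gde δ ε y := by
  classical
  set N : ℕ := ⌊1/δ⌋₊ with hN
  set T : ℕ → Set ℝ := fun n => Set.Icc (n * δ - ε) (n * δ + ε) with hT
  have hGint := integrable_Gde δ ε hδ hε
  have hmeas : ∀ n, MeasurableSet (T n) := fun n => measurableSet_Icc
  -- disjointness
  have hdisj : Set.Pairwise ↑(Finset.range (N+1)) (Function.onFun Disjoint T) := by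
    have key : ∀ a b : ℕ, a < b → Disjoint (T a) (T b) := by
      intro a b hab
      apply Set.disjoint_left.2
      intro x hxa hxb
      have hxa2 : x ≤ a * δ + ε := hxa.2
      have hxb1 : (b:ℝ) * δ - ε ≤ x := hxb.1
      have hcast : (a:ℝ) + 1 ≤ b := by exact_mod_cast hab
      nlinarith
    intro m _ n _ hmn
    rcases lt_or_gt_of_ne hmn with h | h
    · exact key m n h
    · exact (key n m h).symm
  -- each interval is inside [-2,2]
  have hsub : ∀ n ∈ Finset.range (N+1), T n ⊆ Set.Icc (-2 : ℝ) 2 := by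
    intro n hn x hx
    have hn' : (n : ℝ) ≤ N := by exact_mod_cast Nat.lt_succ_iff.1 (Finset.mem_range.1 hn)
    have hNδ : (N:ℝ) * δ ≤ 1 := by
      have h1 : (N:ℝ) ≤ 1/δ := Nat.floor_le (by positivity)
      calc (N:ℝ) * δ ≤ (1/δ) * δ := by nlinarith
        _ = 1 := by field_simp
    have hnδ0 : (0:ℝ) ≤ n * δ := by positivity
    have hnδ1 : (n:ℝ) * δ ≤ 1 := le_trans (by nlinarith) hNδ
    exact ⟨by nlinarith [hx.1], by nlinarith [hx.2]⟩
  -- lower bound each piece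
  have hstep : ∀ n ∈ Finset.range (N+1), δ * stdG 2 ≤ ∫ x in T n, Gde δ ε x := by
    intro n hn
    have hμ : MeasureTheory.volume (T n) = ENNReal.ofReal (2 * ε) := by
      rw [hT]
      simp only [Real.volume_Icc]
      congr 1; ring
    have hc : ∀ x ∈ T n, (δ / (2 * ε)) * stdG 2 ≤ Gde δ ε x := by
      intro x hx
      have hmem : ∃ m : ℤ, |x - m * δ| ≤ ε :=
        ⟨(n:ℤ), by push_cast; rw [abs_le]; exact ⟨by linarith [hx.1], by linarith [hx.2]⟩⟩
      have hstdG : stdG 2 ≤ stdG x := by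
        have hx2 : x ∈ Set.Icc (-2:ℝ) 2 := hsub n hn hx
        have hsq : x ^ 2 ≤ 2 ^ 2 := sq_le_sq' (by linarith [hx2.1]) hx2.2
        unfold stdG
        have h2π : (0:ℝ) ≤ (Real.sqrt (2 * Real.pi))⁻¹ := by positivity
        exact mul_le_mul_of_nonneg_left (Real.exp_le_exp.2 (by linarith)) h2π
      unfold Gde
      rw [if_pos hmem]
      exact mul_le_mul_of_nonneg_left hstdG (by positivity)
    have := MeasureTheory.setIntegral_ge_of_const_le (hmeas n)
      (by rw [hμ]; exact ENNReal.ofReal_ne_top) hc (hGint.integrableOn)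
    rw [MeasureTheory.measureReal_def, hμ, ENNReal.toReal_ofReal (by positivity), smul_eq_mul] at this
    calc δ * stdG 2 = (δ / (2 * ε)) * stdG 2 * (2 * ε) := by field_simp
      _ ≤ _ := by linarith
  -- sum up
  have hsum : ∑ n ∈ Finset.range (N+1), ∫ x in T n, Gde δ ε x ≤ ∫ y, Gde δ ε y := by
    rw [← MeasureTheory.integral_biUnion_finset (Finset.range (N+1)) (fun n _ => hmeas n) hdisj
      (fun n _ => hGint.integrableOn)]
    exact MeasureTheory.setIntegral_le_integral hGint
      (Filter.Eventually.of_forall (Gde_nonneg δ ε hδ hε))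
  have hcount : (1:ℝ) ≤ (N + 1) * δ := by
    have : (1:ℝ)/δ < N + 1 := Nat.lt_floor_add_one _
    rw [div_lt_iff₀ hδ] at this
    push_cast
    linarith
  calc stdG 2 = 1 * stdG 2 := (one_mul _).symm
    _ ≤ ((N:ℝ) + 1) * δ * stdG 2 := by
        exact mul_le_mul_of_nonneg_right hcount (le_of_lt (stdG_pos 2))
    _ = ∑ n ∈ Finset.range (N+1), δ * stdG 2 := by
        rw [Finset.sum_const, Finset.card_range]; push_cast; ring
    _ ≤ ∑ n ∈ Finset.range (N+1), ∫ x in T n, Gde δ ε x := Finset.sum_le_sum hstep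
    _ ≤ _ := hsum

/-- The normalized density A. -/
noncomputable def Adens (δ ε x : ℝ) : ℝ := Gde δ ε x / (∫ y, Gde δ ε y)

/-- The shifted density B. -/
noncomputable def Bdens (δ ε : ℝ) (d : ℕ) (x : ℝ) : ℝ :=
  if (d : ℝ) * δ + 5 * ε < |x| then Adens δ ε x else Adens δ ε (x + 4 * ε)

/-- χ²-divergence of B with respect to N(0,1) is O((δ/ε)²). -/
theorem chi_square_B_bound :
    ∃ C : ℝ, 0 < C ∧ ∀ δ ε : ℝ, ∀ d : ℕ, 2 ≤ d →
      0 < δ → δ < 1 → 0 < ε → ε < δ / 8 →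
      (∫ x, (Bdens δ ε d x) ^ 2 / stdG x) - 1 ≤ C * (δ / ε) ^ 2 := by
  have hs2 := stdG_pos 2
  refine ⟨(1 + Real.exp 1) / (4 * (stdG 2) ^ 2), by positivity, ?_⟩
  intro δ ε d hd hδ hδ1 hε hε8
  have hIlb : stdG 2 ≤ ∫ y, Gde δ ε y := Gde_integral_lb δ ε hδ hδ1 hε hε8
  set I := ∫ y, Gde δ ε y with hIdef
  have hIpos : 0 < I := lt_of_lt_of_le hs2 hIlb
  set K : ℝ := (δ / (2 * ε * I)) ^ 2 with hK
  have hKpos : 0 < K := by positivity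
  have hA_le : ∀ y, Adens δ ε y ≤ (δ / (2 * ε * I)) * stdG y := by
    intro y
    unfold Adens
    rw [← hIdef]
    calc Gde δ ε y / I ≤ ((δ / (2 * ε)) * stdG y) / I := by
          gcongr
          exact Gde_le δ ε hδ hε y
      _ = (δ / (2 * ε * I)) * stdG y := by field_simp
  have hA_nonneg : ∀ y, 0 ≤ Adens δ ε y := by
    intro y
    unfold Adens
    rw [← hIdef]
    exact div_nonneg (Gde_nonneg δ ε hδ hε y) hIpos.le
  have hAsq : ∀ y, (Adens δ ε y) ^ 2 ≤ K * stdG y ^ 2 := by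
    intro y
    calc (Adens δ ε y) ^ 2 ≤ ((δ / (2 * ε * I)) * stdG y) ^ 2 := by
          exact pow_le_pow_left₀ (hA_nonneg y) (hA_le y) 2
      _ = K * stdG y ^ 2 := by rw [hK]; ring
  -- pointwise bound
  have hpt : ∀ x, (Bdens δ ε d x) ^ 2 / stdG x
      ≤ K * stdG x + (K * Real.exp 1) * stdG (x + 8 * ε) := by
    intro x
    have h16 : Real.exp ((4 * ε) ^ 2) ≤ Real.exp 1 := Real.exp_le_exp.2 (by nlinarith)
    have hsx := stdG_pos x
    have hs8 := stdG_pos (x + 8 * ε)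
    unfold Bdens
    split
    · calc (Adens δ ε x) ^ 2 / stdG x ≤ (K * stdG x ^ 2) / stdG x := by
            gcongr
            exact hAsq x
        _ = K * stdG x := by field_simp
        _ ≤ K * stdG x + (K * Real.exp 1) * stdG (x + 8 * ε) := by
            have := mul_nonneg (mul_nonneg hKpos.le (Real.exp_pos 1).le) hs8.le
            linarith
    · calc (Adens δ ε (x + 4 * ε)) ^ 2 / stdG x ≤ (K * stdG (x + 4 * ε) ^ 2) / stdG x := by
            gcongr
            exact hAsq (x + 4 * ε)
        _ = K * (stdG (x + 4 * ε) ^ 2 / stdG x) := by ring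
        _ = K * (Real.exp ((4 * ε) ^ 2) * stdG (x + 2 * (4 * ε))) := by rw [stdG_sq_div]
        _ = K * Real.exp ((4 * ε) ^ 2) * stdG (x + 8 * ε) := by ring_nf
        _ ≤ K * Real.exp 1 * stdG (x + 8 * ε) := by gcongr
        _ ≤ K * stdG x + (K * Real.exp 1) * stdG (x + 8 * ε) := by
            have := mul_nonneg hKpos.le hsx.le
            linarith
  -- integrability of the majorant
  have hint1 : Integrable (fun x => stdG (x + 8 * ε)) :=
    integrable_stdG.comp_add_right (8 * ε)
  have hint : Integrable (fun x => K * stdG x + (K * Real.exp 1) * stdG (x + 8 * ε)) :=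
    (integrable_stdG.const_mul K).add (hint1.const_mul (K * Real.exp 1))
  have hmono := MeasureTheory.integral_mono_of_nonneg
    (Filter.Eventually.of_forall fun x => div_nonneg (sq_nonneg _) (stdG_pos x).le)
    hint (Filter.Eventually.of_forall hpt)
  have hcalc : ∫ x, (K * stdG x + (K * Real.exp 1) * stdG (x + 8 * ε))
      = K + K * Real.exp 1 := by
    rw [MeasureTheory.integral_add (integrable_stdG.const_mul K)
      (hint1.const_mul (K * Real.exp 1)),
      MeasureTheory.integral_const_mul, MeasureTheory.integral_const_mul,
      integral_stdG,
      show (∫ x, stdG (x + 8 * ε)) = ∫ x, stdG x from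
        MeasureTheory.integral_add_right_eq_self stdG (8 * ε),
      integral_stdG]
    ring
  have hKle : K ≤ (δ / ε) ^ 2 / (4 * (stdG 2) ^ 2) := by
    have h1 : (δ / (2 * ε * I)) ^ 2 ≤ (δ / (2 * ε * stdG 2)) ^ 2 := by
      have hden : 2 * ε * stdG 2 ≤ 2 * ε * I := by nlinarith
      gcongr
    calc K ≤ (δ / (2 * ε * stdG 2)) ^ 2 := h1
      _ = (δ / ε) ^ 2 / (4 * (stdG 2) ^ 2) := by
        field_simp
        ring
  calc (∫ x, (Bdens δ ε d x) ^ 2 / stdG x) - 1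
      ≤ (K + K * Real.exp 1) - 1 := by rw [hcalc] at hmono; linarith
    _ ≤ K * (1 + Real.exp 1) := by nlinarith
    _ ≤ ((δ / ε) ^ 2 / (4 * (stdG 2) ^ 2)) * (1 + Real.exp 1) := by
        have : (0:ℝ) < 1 + Real.exp 1 := by positivity
        nlinarith
    _ = (1 + Real.exp 1) / (4 * (stdG 2) ^ 2) * (δ / ε) ^ 2 := by ring
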